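/- arXiv:2007.05271 — 2 statements merged into one kernel-verified Lean document; each statement's English description precedes it below -/
import Mathlib

section
/- For λ ≥ 1 and any positive semidefinite kernel matrix sequence arising from points with k(z,z) ≤ 1, the posterior standard deviations satisfy ∑_{t=1}^T σ_{t-1}(z_t) ≤ 2√(T λ γ_T), where γ_T = (1/2) log det(I_T + K_T/λ) and σ_{t-1}^2(z_t) = k(z_t,z_t) − k_{t-1}(z_t)^T (K_{t-1} + λ I)^{-1} k_{t-1}(z_t). -/
open Finset Matrix

private lemma aux_log_lb {x : ℝ} (h0 : 0 ≤ x) (h1 : x ≤ 1) : x ≤ 2 * Real.log (1 + x) := by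
  have hpos : (0:ℝ) < 1 + x := by linarith
  have key : x / 2 ≤ Real.log (1 + x) := by
    rw [Real.le_log_iff_exp_le hpos]
    have h2 : 1 - x/2 ≤ Real.exp (-(x/2)) := by
      have := Real.add_one_le_exp (-(x/2)); linarith
    have h3 : (0:ℝ) < 1 - x/2 := by linarith
    have h4 : Real.exp (x/2) * Real.exp (-(x/2)) = 1 := by
      rw [← Real.exp_add]; simp
    nlinarith [Real.exp_pos (x/2), Real.exp_pos (-(x/2))]
  linarith

private lemma aux_smul_one_posdef {n : ℕ} {lam : ℝ} (h : 0 < lam) :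
    (lam • (1 : Matrix (Fin n) (Fin n) ℝ)).PosDef := by
  rw [smul_one_eq_diagonal]
  exact Matrix.PosDef.diagonal (fun _ => h)

/-- sum of posterior standard deviations bounded via information gain. -/
theorem sum_posterior_std_le {Z : Type*}
    (k : Z → Z → ℝ)
    (hPSD : ∀ (n : ℕ) (w : Fin n → Z),
      (Matrix.of fun i j => k (w i) (w j) : Matrix (Fin n) (Fin n) ℝ).PosSemidef)
    (hbdd : ∀ z, k z z ≤ 1)
    (lam : ℝ) (hlam : 1 ≤ lam)
    (z : ℕ → Z) (T : ℕ)
    (K : (t : ℕ) → Matrix (Fin t) (Fin t) ℝ)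
    (hK : ∀ t, K t = Matrix.of fun i j : Fin t => k (z i) (z j))
    (σsq : ℕ → ℝ)
    (hσsq : ∀ t, σsq t =
      k (z t) (z t) -
        (fun i : Fin t => k (z i) (z t)) ⬝ᵥ
          ((K t + lam • (1 : Matrix (Fin t) (Fin t) ℝ))⁻¹ *ᵥ fun i : Fin t => k (z i) (z t)))
    (γ : ℝ)
    (hγ : γ = (1 / 2) * Real.log ((1 + lam⁻¹ • K T : Matrix (Fin T) (Fin T) ℝ).det)) :
    ∑ t ∈ range T, Real.sqrt (σsq t) ≤ 2 * Real.sqrt (T * lam * γ) := by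
  have hlam0 : (0:ℝ) < lam := lt_of_lt_of_le one_pos hlam
  have hne : lam ≠ 0 := ne_of_gt hlam0
  have ksymm : ∀ a b, k a b = k b a := by
    intro a b
    have h := (hPSD 2 ![a, b]).1
    have h2 := congr_fun (congr_fun h 0) 1
    simpa [Matrix.conjTranspose_apply] using h2.symm
  have hKPSD : ∀ t, (K t).PosSemidef := by
    intro t; rw [hK t]; exact hPSD t fun i => z i
  have hApos : ∀ t, (K t + lam • (1 : Matrix (Fin t) (Fin t) ℝ)).PosDef :=
    fun t => Matrix.PosDef.posSemidef_add (hKPSD t) (aux_smul_one_posdef hlam0)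
  have hblock : ∀ t : ℕ,
      (K (t+1)).submatrix (finSumFinEquiv : Fin t ⊕ Fin 1 ≃ Fin (t+1)) finSumFinEquiv
      = fromBlocks (K t) (Matrix.replicateCol (Fin 1) (fun i : Fin t => k (z i) (z t)))
          (Matrix.replicateCol (Fin 1) (fun i : Fin t => k (z i) (z t)))ᴴ
          (Matrix.of fun _ _ : Fin 1 => k (z t) (z t)) := by
    intro t
    ext i j
    rcases i with i | i <;> rcases j with j | j <;>
      simp [hK, Matrix.submatrix_apply, Matrix.conjTranspose_replicateCol, Fin.val_eq_zero,
        Matrix.fromBlocks_apply₁₁, Matrix.fromBlocks_apply₁₂, Matrix.fromBlocks_apply₂₁,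
        Matrix.fromBlocks_apply₂₂, ksymm (z t)]
  -- determinant recursion
  have hdetstep : ∀ t : ℕ,
      (K (t+1) + lam • 1).det = (K t + lam • 1).det * (lam + σsq t) := by
    intro t
    set bv : Fin t → ℝ := fun i : Fin t => k (z i) (z t) with hbv
    set A := K t + lam • (1 : Matrix (Fin t) (Fin t) ℝ) with hA
    have hsub : (K (t+1) + lam • 1).submatrix
        (finSumFinEquiv : Fin t ⊕ Fin 1 ≃ Fin (t+1)) finSumFinEquiv
        = fromBlocks A (Matrix.replicateCol (Fin 1) bv) (Matrix.replicateCol (Fin 1) bv)ᴴ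
            ((Matrix.of fun _ _ : Fin 1 => k (z t) (z t)) + lam • 1) := by
      have h1 : (K (t+1) + lam • 1).submatrix
          (finSumFinEquiv : Fin t ⊕ Fin 1 ≃ Fin (t+1)) finSumFinEquiv
          = (K (t+1)).submatrix finSumFinEquiv finSumFinEquiv
            + lam • ((1 : Matrix (Fin (t+1)) (Fin (t+1)) ℝ).submatrix finSumFinEquiv
                finSumFinEquiv) := rfl
      rw [h1, hblock t, Matrix.submatrix_one_equiv, ← Matrix.fromBlocks_one,
        Matrix.fromBlocks_smul, Matrix.fromBlocks_add]
      simp [hA, hbv]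
    haveI : Invertible A := (hApos t).isUnit.invertible
    have hdet := Matrix.det_fromBlocks₁₁ A (Matrix.replicateCol (Fin 1) bv) (Matrix.replicateCol (Fin 1) bv)ᴴ
        ((Matrix.of fun _ _ : Fin 1 => k (z t) (z t)) + lam • 1)
    rw [← Matrix.det_submatrix_equiv_self (finSumFinEquiv : Fin t ⊕ Fin 1 ≃ Fin (t+1)), hsub,
      hdet, invOf_eq_nonsing_inv]
    congr 1
    rw [Matrix.det_fin_one]
    rw [hσsq t, Matrix.conjTranspose_replicateCol, Matrix.mul_assoc, ← Matrix.replicateCol_mulVec]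
    simp [Matrix.add_apply, Matrix.sub_apply, Matrix.replicateRow_mul_replicateCol_apply, Matrix.one_apply,
      star_trivial, ← hbv, ← hA]
    ring
  -- bounds on σsq
  have hσbnd : ∀ t : ℕ, 0 ≤ σsq t ∧ σsq t ≤ 1 := by
    intro t
    set bv : Fin t → ℝ := fun i : Fin t => k (z i) (z t) with hbv
    set A := K t + lam • (1 : Matrix (Fin t) (Fin t) ℝ) with hA
    haveI : Invertible A := (hApos t).isUnit.invertible
    constructor
    · have hP : (fromBlocks (lam • (1 : Matrix (Fin t) (Fin t) ℝ)) 0 0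
          (0 : Matrix (Fin 1) (Fin 1) ℝ)).PosSemidef := by
        rw [show (0 : Matrix (Fin 1) (Fin 1) ℝ) = diagonal 0 from (Matrix.diagonal_zero).symm,
          smul_one_eq_diagonal, Matrix.fromBlocks_diagonal]
        refine Matrix.PosSemidef.diagonal ?_
        intro i; rcases i with i | i <;> simp [hlam0.le]
      have hps : (fromBlocks A (Matrix.replicateCol (Fin 1) bv) (Matrix.replicateCol (Fin 1) bv)ᴴ
          (Matrix.of fun _ _ : Fin 1 => k (z t) (z t))).PosSemidef := by
        have heq : fromBlocks A (Matrix.replicateCol (Fin 1) bv) (Matrix.replicateCol (Fin 1) bv)ᴴ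
            (Matrix.of fun _ _ : Fin 1 => k (z t) (z t))
            = (K (t+1)).submatrix (finSumFinEquiv : Fin t ⊕ Fin 1 ≃ Fin (t+1)) finSumFinEquiv
              + fromBlocks (lam • 1) 0 0 0 := by
          rw [hblock t, Matrix.fromBlocks_add]
          simp [hA, hbv]
        rw [heq]
        exact ((hKPSD (t+1)).submatrix _).add hP
      rw [Matrix.PosDef.fromBlocks₁₁ _ _ (hApos t)] at hps
      have hentry : ((Matrix.of fun _ _ : Fin 1 => k (z t) (z t))
          - (Matrix.replicateCol (Fin 1) bv)ᴴ * A⁻¹ * Matrix.replicateCol (Fin 1) bv) 0 0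
          = k (z t) (z t) - bv ⬝ᵥ A⁻¹ *ᵥ bv := by
        rw [Matrix.conjTranspose_replicateCol, Matrix.mul_assoc, ← Matrix.replicateCol_mulVec]
        simp [Matrix.sub_apply, star_trivial]
      have h2 := hps.dotProduct_mulVec_nonneg (fun _ => (1:ℝ))
      have h3 : (0:ℝ) ≤ ((Matrix.of fun _ _ : Fin 1 => k (z t) (z t))
          - (Matrix.replicateCol (Fin 1) bv)ᴴ * A⁻¹ * Matrix.replicateCol (Fin 1) bv) 0 0 := by
        simpa [Matrix.mulVec, dotProduct] using h2
      rw [hσsq t]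
      rw [hentry] at h3
      simpa [← hbv, ← hA] using h3
    · have hinv : (0:ℝ) ≤ bv ⬝ᵥ A⁻¹ *ᵥ bv := by
        have := ((Matrix.posDef_inv_iff.mpr (hApos t)).posSemidef).dotProduct_mulVec_nonneg bv
        simpa [star_trivial] using this
      have := hbdd (z t)
      rw [hσsq t]
      simp only [← hbv, ← hA]
      linarith
  -- telescoped determinant
  have hdetT : ∀ n : ℕ, (K n + lam • 1).det = ∏ t ∈ range n, (lam + σsq t) := by
    intro n
    induction n with
    | zero => simp [Matrix.det_isEmpty]
    | succ m ih => rw [hdetstep m, ih, Finset.prod_range_succ]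
  -- γ as sum of logs
  have hfacpos : ∀ t : ℕ, (0:ℝ) < 1 + σsq t / lam := by
    intro t
    have := (hσbnd t).1
    positivity
  have hγsum : 2 * γ = ∑ t ∈ range T, Real.log (1 + σsq t / lam) := by
    have hscale : (1 + lam⁻¹ • K T : Matrix (Fin T) (Fin T) ℝ)
        = lam⁻¹ • (K T + lam • 1) := by
      rw [smul_add, smul_smul, inv_mul_cancel₀ hne, one_smul, add_comm]
    have hdd : (1 + lam⁻¹ • K T : Matrix (Fin T) (Fin T) ℝ).det
        = ∏ t ∈ range T, (1 + σsq t / lam) := by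
      rw [hscale, Matrix.det_smul, hdetT T, Fintype.card_fin,
        ← Finset.card_range T, ← Finset.prod_const, Finset.card_range,
        ← Finset.prod_mul_distrib]
      refine Finset.prod_congr rfl fun t _ => ?_
      field_simp
    rw [hγ, hdd, Real.log_prod (fun t _ => ne_of_gt (hfacpos t))]
    ring
  have hγ0 : 0 ≤ γ := by
    have : 0 ≤ ∑ t ∈ range T, Real.log (1 + σsq t / lam) :=
      Finset.sum_nonneg fun t _ => Real.log_nonneg (by
        have := (hσbnd t).1; have : 0 ≤ σsq t / lam := by positivity
        linarith)
    linarith [hγsum]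
  -- sum of σsq bounded by 4 lam γ
  have hS : ∑ t ∈ range T, σsq t ≤ 4 * lam * γ := by
    have h1 : ∀ t ∈ range T, σsq t ≤ 2 * lam * Real.log (1 + σsq t / lam) := by
      intro t _
      obtain ⟨h0, hle1⟩ := hσbnd t
      have hx0 : 0 ≤ σsq t / lam := by positivity
      have hx1 : σsq t / lam ≤ 1 := by
        rw [div_le_one hlam0]; linarith
      have := aux_log_lb hx0 hx1
      have h2 : σsq t / lam * lam ≤ 2 * Real.log (1 + σsq t / lam) * lam :=
        mul_le_mul_of_nonneg_right this hlam0.le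
      rw [div_mul_cancel₀ _ hne] at h2
      linarith
    calc ∑ t ∈ range T, σsq t
        ≤ ∑ t ∈ range T, 2 * lam * Real.log (1 + σsq t / lam) := Finset.sum_le_sum h1
      _ = 2 * lam * ∑ t ∈ range T, Real.log (1 + σsq t / lam) := by
          rw [Finset.mul_sum]
      _ = 2 * lam * (2 * γ) := by rw [hγsum]
      _ = 4 * lam * γ := by ring
  -- Cauchy–Schwarz
  have hCS : (∑ t ∈ range T, Real.sqrt (σsq t)) ^ 2 ≤ T * ∑ t ∈ range T, σsq t := by
    have := sq_sum_le_card_mul_sum_sq (s := range T) (f := fun t => Real.sqrt (σsq t))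
    simpa [Finset.card_range, Real.sq_sqrt (hσbnd _).1] using this
  have hsum0 : 0 ≤ ∑ t ∈ range T, Real.sqrt (σsq t) :=
    Finset.sum_nonneg fun t _ => Real.sqrt_nonneg _
  have hfin : (∑ t ∈ range T, Real.sqrt (σsq t)) ^ 2 ≤ 4 * (T * lam * γ) := by
    have h2 : (T:ℝ) * ∑ t ∈ range T, σsq t ≤ (T:ℝ) * (4 * lam * γ) :=
      mul_le_mul_of_nonneg_left hS (Nat.cast_nonneg T)
    calc (∑ t ∈ range T, Real.sqrt (σsq t)) ^ 2
        ≤ (T:ℝ) * ∑ t ∈ range T, σsq t := hCS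
      _ ≤ (T:ℝ) * (4 * lam * γ) := h2
      _ = 4 * (T * lam * γ) := by ring
  have h4 : Real.sqrt 4 = 2 := by
    rw [show (4:ℝ) = 2^2 by norm_num, Real.sqrt_sq (by norm_num : (0:ℝ) ≤ 2)]
  calc ∑ t ∈ range T, Real.sqrt (σsq t)
      = Real.sqrt ((∑ t ∈ range T, Real.sqrt (σsq t)) ^ 2) := (Real.sqrt_sq hsum0).symm
    _ ≤ Real.sqrt (4 * (T * lam * γ)) := Real.sqrt_le_sqrt hfin
    _ = 2 * Real.sqrt (T * lam * γ) := by
        rw [Real.sqrt_mul (by norm_num : (0:ℝ) ≤ 4), h4]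
end

section
/- Hedge/exponential-weights regret bound (deterministic, full information): for bounded rewards r̃_t : X → [0,1] on a finite set X, the exponential-weights expected reward satisfies max_{x∈X} ∑_{t=1}^T r̃_t(x) − ∑_{t=1}^T ⟨p_t, r̃_t⟩ ≤ log|X|/η + η T/8, which for η = √(8 log|X|/T) yields a bound of √((T/2) log|X|). -/
open Finset

/-- Multiplicative-weights iterates with uniform initialization. -/
noncomputable def hedgeStrategy {X : Type*} [Fintype X] (η : ℝ) (r : ℕ → X → ℝ) :
    ℕ → X → ℝ
  | 0 => fun _ => 1 / (Fintype.card X : ℝ)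
  | (t + 1) => fun x =>
      hedgeStrategy η r t x * Real.exp (η * r t x) /
        ∑ x' : X, hedgeStrategy η r t x' * Real.exp (η * r t x')

lemma hoeff_log (μ : ℝ) (hμ0 : 0 ≤ μ) (hμ1 : μ ≤ 1) (s : ℝ) (hs : 0 ≤ s) :
    Real.log (1 - μ + μ * Real.exp s) ≤ s * μ + s ^ 2 / 8 := by
  set D : ℝ → ℝ := fun u => 1 - μ + μ * Real.exp u with hDdef
  have hD : ∀ u, 0 < D u := by
    intro u
    have h1 := Real.exp_pos u
    have h2 : 0 ≤ μ * Real.exp u := mul_nonneg hμ0 h1.le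
    simp only [hDdef]
    nlinarith
  have hDderiv : ∀ u, HasDerivAt D (μ * Real.exp u) u := by
    intro u
    exact ((Real.hasDerivAt_exp u).const_mul μ).const_add (1 - μ)
  set G : ℝ → ℝ := fun u => μ + u / 4 - μ * Real.exp u / D u with hGdef
  have hGderiv : ∀ u, HasDerivAt G
      (1 / 4 - (μ * Real.exp u * D u - μ * Real.exp u * (μ * Real.exp u)) / (D u) ^ 2) u := by
    intro u
    have h1 : HasDerivAt (fun v : ℝ => μ + v / 4) (1 / 4) u := by
      simpa using ((hasDerivAt_id u).div_const 4).const_add μ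
    have h2 : HasDerivAt (fun v => μ * Real.exp v) (μ * Real.exp u) u :=
      (Real.hasDerivAt_exp u).const_mul μ
    exact h1.sub (h2.div (hDderiv u) (hD u).ne')
  have hGmono : Monotone G := by
    apply monotone_of_deriv_nonneg
    · exact fun u => (hGderiv u).differentiableAt
    · intro u
      rw [(hGderiv u).deriv]
      have hDu := hD u
      have ha : 0 ≤ μ * Real.exp u := mul_nonneg hμ0 (Real.exp_pos u).le
      have : (μ * Real.exp u * D u - μ * Real.exp u * (μ * Real.exp u)) / (D u) ^ 2 ≤ 1 / 4 := by
        rw [div_le_iff₀ (by positivity)]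
        obtain ⟨d, hd⟩ : ∃ d, d = D u := ⟨D u, rfl⟩
        rw [← hd]
        nlinarith [sq_nonneg (d - 2 * (μ * Real.exp u))]
      linarith
  have hG0 : G 0 = 0 := by
    simp [hGdef, hDdef]
  have hGnonneg : ∀ u, 0 ≤ u → 0 ≤ G u := by
    intro u hu
    rw [← hG0]; exact hGmono hu
  set F : ℝ → ℝ := fun u => u * μ + u ^ 2 / 8 - Real.log (D u) with hFdef
  have hFderiv : ∀ u, HasDerivAt F (G u) u := by
    intro u
    have h1 : HasDerivAt (fun v : ℝ => v * μ + v ^ 2 / 8) (μ + 2 * u / 8) u := by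
      have := ((hasDerivAt_pow 2 u).div_const 8)
      exact (((hasDerivAt_id u).mul_const μ).add this).congr_deriv (by norm_num)
    have h2 : HasDerivAt (fun v => Real.log (D v)) (μ * Real.exp u / D u) u :=
      (hDderiv u).log (hD u).ne'
    have := h1.sub h2
    refine this.congr_deriv ?_
    simp only [hGdef]; ring
  have hFmono : MonotoneOn F (Set.Ici 0) := by
    apply monotoneOn_of_deriv_nonneg (convex_Ici 0)
    · exact (fun u _ => (hFderiv u).differentiableAt.continuousAt.continuousWithinAt)
    · exact fun u _ => (hFderiv u).differentiableAt.differentiableWithinAt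
    · intro u hu
      rw [(hFderiv u).deriv]
      exact hGnonneg u (le_of_lt (by simpa using hu))
  have hF0 : F 0 = 0 := by simp [hFdef, hDdef]
  have := hFmono (Set.self_mem_Ici) (Set.mem_Ici.2 hs) hs
  rw [hF0] at this
  simp only [hFdef] at this
  linarith

lemma hedge_closed_form {X : Type*} [Fintype X] [Nonempty X] (η : ℝ) (r : ℕ → X → ℝ)
    (t : ℕ) : ∀ x, hedgeStrategy η r t x =
      Real.exp (η * ∑ s ∈ range t, r s x) /
        ∑ x' : X, Real.exp (η * ∑ s ∈ range t, r s x') := by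
  induction t with
  | zero => intro x; simp [hedgeStrategy]
  | succ t ih =>
    intro x
    have hZ : (0:ℝ) < ∑ x' : X, Real.exp (η * ∑ s ∈ range t, r s x') :=
      Finset.sum_pos (fun _ _ => Real.exp_pos _) univ_nonempty
    have hZ' : (0:ℝ) < ∑ x' : X, Real.exp (η * ∑ s ∈ range (t+1), r s x') :=
      Finset.sum_pos (fun _ _ => Real.exp_pos _) univ_nonempty
    have key : ∀ y : X, Real.exp (η * ∑ s ∈ range t, r s y) /
        (∑ x' : X, Real.exp (η * ∑ s ∈ range t, r s x')) * Real.exp (η * r t y)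
        = Real.exp (η * ∑ s ∈ range (t+1), r s y) /
          (∑ x' : X, Real.exp (η * ∑ s ∈ range t, r s x')) := by
      intro y
      rw [Finset.sum_range_succ, mul_add, Real.exp_add]
      ring
    show hedgeStrategy η r t x * Real.exp (η * r t x) /
        (∑ x' : X, hedgeStrategy η r t x' * Real.exp (η * r t x')) = _
    simp only [ih, key]
    rw [← Finset.sum_div, div_div_div_eq, mul_comm, ← div_div_div_eq,
      div_self hZ.ne', one_div_div]

/-- Hedge regret bound with full-information feedback. -/
theorem hedge_regret_bound {X : Type*} [Fintype X] [Nonempty X]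
    (η : ℝ) (hη : 0 < η) (T : ℕ) (hT : 1 ≤ T)
    (r : ℕ → X → ℝ) (hr : ∀ t x, r t x ∈ Set.Icc (0 : ℝ) 1) :
    (univ.sup' univ_nonempty fun x => ∑ t ∈ range T, r t x)
        - ∑ t ∈ range T, ∑ x : X, hedgeStrategy η r t x * r t x
      ≤ Real.log (Fintype.card X) / η + η * T / 8 ∧
    (η = Real.sqrt (8 * Real.log (Fintype.card X) / T) →
      (univ.sup' univ_nonempty fun x => ∑ t ∈ range T, r t x)
          - ∑ t ∈ range T, ∑ x : X, hedgeStrategy η r t x * r t x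
        ≤ Real.sqrt ((T / 2 : ℝ) * Real.log (Fintype.card X))) := by
  set Z : ℕ → ℝ := fun t => ∑ x : X, Real.exp (η * ∑ s ∈ range t, r s x) with hZdef
  have hZpos : ∀ t, 0 < Z t := fun t =>
    Finset.sum_pos (fun _ _ => Real.exp_pos _) univ_nonempty
  set P : ℕ → ℝ := fun t => ∑ x : X, hedgeStrategy η r t x * r t x with hPdef
  -- one-step bound
  have hstep : ∀ t, Real.log (Z (t+1)) ≤ Real.log (Z t) + η * P t + η ^ 2 / 8 := by
    intro t
    set N : ℝ := ∑ x : X, Real.exp (η * ∑ s ∈ range t, r s x) * r t x with hNdef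
    have hN0 : 0 ≤ N :=
      Finset.sum_nonneg fun x _ => mul_nonneg (Real.exp_pos _).le (hr t x).1
    have hNZ : N ≤ Z t :=
      Finset.sum_le_sum fun x _ =>
        mul_le_of_le_one_right (Real.exp_pos _).le (hr t x).2
    set μ : ℝ := N / Z t with hμdef
    have hμ0 : 0 ≤ μ := div_nonneg hN0 (hZpos t).le
    have hμ1 : μ ≤ 1 := (div_le_one (hZpos t)).2 hNZ
    have hP : P t = μ := by
      simp only [hPdef, hμdef, hNdef, hZdef]
      rw [Finset.sum_div]
      refine Finset.sum_congr rfl fun x _ => ?_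
      rw [hedge_closed_form η r t x, div_mul_eq_mul_div]
    have hconv : ∀ x : X, Real.exp (η * r t x) ≤ 1 - r t x + r t x * Real.exp η := by
      intro x
      have h := convexOn_exp.2 (Set.mem_univ (0:ℝ)) (Set.mem_univ η)
        (show (0:ℝ) ≤ 1 - r t x by linarith [(hr t x).2])
        (show (0:ℝ) ≤ r t x from (hr t x).1)
        (show 1 - r t x + r t x = 1 by ring)
      simpa [smul_eq_mul, mul_comm] using h
    have hub : Z (t+1) ≤ Z t - N + N * Real.exp η := by
      have h1 : Z (t+1) = ∑ x : X,
          Real.exp (η * ∑ s ∈ range t, r s x) * Real.exp (η * r t x) := by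
        refine Finset.sum_congr rfl fun x _ => ?_
        rw [Finset.sum_range_succ, mul_add, Real.exp_add]
      have h2 : ∑ x : X, Real.exp (η * ∑ s ∈ range t, r s x) * Real.exp (η * r t x)
          ≤ ∑ x : X, Real.exp (η * ∑ s ∈ range t, r s x) *
            (1 - r t x + r t x * Real.exp η) :=
        Finset.sum_le_sum fun x _ =>
          mul_le_mul_of_nonneg_left (hconv x) (Real.exp_pos _).le
      have h3 : ∑ x : X, Real.exp (η * ∑ s ∈ range t, r s x) *
          (1 - r t x + r t x * Real.exp η) = Z t - N + N * Real.exp η := by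
        simp only [mul_sub, mul_add, mul_one, ← mul_assoc]
        rw [Finset.sum_add_distrib, Finset.sum_sub_distrib, ← Finset.sum_mul]
      linarith [h1 ▸ h2.trans_eq h3]
    have hfac : Z t - N + N * Real.exp η = Z t * (1 - μ + μ * Real.exp η) := by
      rw [hμdef]
      field_simp [(hZpos t).ne']
    have hpos2 : 0 < 1 - μ + μ * Real.exp η := by
      have : (1:ℝ) ≤ Real.exp η := Real.one_le_exp hη.le
      nlinarith
    calc Real.log (Z (t+1)) ≤ Real.log (Z t * (1 - μ + μ * Real.exp η)) := by
          apply Real.log_le_log (hZpos _)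
          rw [← hfac]; exact hub
      _ = Real.log (Z t) + Real.log (1 - μ + μ * Real.exp η) :=
          Real.log_mul (hZpos t).ne' hpos2.ne'
      _ ≤ Real.log (Z t) + (η * μ + η ^ 2 / 8) := by
          linarith [hoeff_log μ hμ0 hμ1 η hη.le]
      _ = Real.log (Z t) + η * P t + η ^ 2 / 8 := by rw [hP]; ring
  -- telescoping
  have htel : Real.log (Z T) ≤ Real.log (Fintype.card X)
      + η * (∑ t ∈ range T, P t) + T * (η ^ 2 / 8) := by
    have h0 : Real.log (Z 0) = Real.log (Fintype.card X) := by
      simp [hZdef]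
    have h1 : Real.log (Z T) - Real.log (Z 0) =
        ∑ t ∈ range T, (Real.log (Z (t+1)) - Real.log (Z t)) :=
      (Finset.sum_range_sub (fun t => Real.log (Z t)) T).symm
    have h2 : ∑ t ∈ range T, (Real.log (Z (t+1)) - Real.log (Z t))
        ≤ ∑ t ∈ range T, (η * P t + η ^ 2 / 8) :=
      Finset.sum_le_sum fun t _ => by linarith [hstep t]
    have h3 : ∑ t ∈ range T, (η * P t + η ^ 2 / 8)
        = η * (∑ t ∈ range T, P t) + T * (η ^ 2 / 8) := by
      rw [Finset.sum_add_distrib, ← Finset.mul_sum, Finset.sum_const, card_range,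
        nsmul_eq_mul]
    linarith [h1 ▸ h2.trans_eq h3, h0 ▸ le_refl (Real.log (Z 0))]
  -- pointwise bound
  have hmain : (univ.sup' univ_nonempty fun x => ∑ t ∈ range T, r t x)
      - ∑ t ∈ range T, P t ≤ Real.log (Fintype.card X) / η + η * T / 8 := by
    rw [sub_le_iff_le_add]
    apply Finset.sup'_le
    intro x _
    have hx : η * ∑ t ∈ range T, r t x ≤ Real.log (Z T) := by
      rw [← Real.log_exp (η * ∑ t ∈ range T, r t x)]
      apply Real.log_le_log (Real.exp_pos _)
      exact Finset.single_le_sum (f := fun y : X => Real.exp (η * ∑ s ∈ range T, r s y))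
        (fun y _ => (Real.exp_pos _).le) (mem_univ x)
    have hx2 : η * ∑ t ∈ range T, r t x ≤ Real.log (Fintype.card X)
        + η * (∑ t ∈ range T, P t) + T * (η ^ 2 / 8) := hx.trans htel
    rw [← le_div_iff₀' hη] at hx2
    have heq : (Real.log (Fintype.card X) + η * (∑ t ∈ range T, P t)
        + T * (η ^ 2 / 8)) / η
        = Real.log (Fintype.card X) / η + η * T / 8 + ∑ t ∈ range T, P t := by
      field_simp
      ring
    linarith [heq ▸ hx2]
  refine ⟨hmain, fun hηeq => ?_⟩
  set L : ℝ := Real.log (Fintype.card X) with hLdef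
  have hT' : (0:ℝ) < T := by exact_mod_cast hT
  have hL : 0 < L := by
    by_contra h
    push_neg at h
    have : (8 * L / T) ≤ 0 := div_nonpos_of_nonpos_of_nonneg (by linarith) hT'.le
    have : η = 0 := by rw [hηeq]; exact Real.sqrt_eq_zero'.mpr this
    exact hη.ne' this
  have hη2T : η ^ 2 * T = 8 * L := by
    have : η ^ 2 = 8 * L / T := by
      rw [hηeq, Real.sq_sqrt (by positivity)]
    rw [this]
    field_simp
  have h4 : ((T:ℝ)/2) * L = (2 * L / η) ^ 2 := by
    have hη4 : η ^ 2 ≠ 0 := pow_ne_zero 2 hη.ne'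
    field_simp
    nlinarith [hη2T]
  have h3 : Real.sqrt ((T/2:ℝ) * L) = 2 * L / η := by
    rw [h4, Real.sqrt_sq (by positivity)]
  have h2 : η * T / 8 = L / η := by
    rw [eq_div_iff hη.ne']
    nlinarith [hη2T]
  have := hmain
  rw [h3]
  calc (univ.sup' univ_nonempty fun x => ∑ t ∈ range T, r t x)
      - ∑ t ∈ range T, P t ≤ L / η + η * T / 8 := hmain
    _ = 2 * L / η := by rw [h2]; ring
end
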